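/- arXiv:2502.09600 — 2 statements merged into one kernel-verified Lean document; each statement's English description precedes it below -/
import Mathlib

section
/- Let (a_j), (b_j) be nonnegative sequences, let 0 < γ < μ < 1, let ε_0 ≥ 0, and suppose a_j ≤ b_j + ε_0 Σ_{l=0}^∞ γ^{|l−j|} a_l for all j in an integer interval [s_1, s_2], with a_l = 0 for l ≤ s_1−3 and l ≥ s_2+3 and all a_l ≤ M. Then there exists C_{μ,γ} > 0 such that whenever C_{μ,γ} ε_0 < 1/2, for every j ∈ [s_1, s_2]: Σ_{l=s_1}^{s_2} μ^{|l−j|} a_l ≤ C Σ_{l=s_1}^{s_2} μ^{|l−j|} b_l + C ε_0 (μ^{j−s_1} + μ^{s_2−j}) M. -/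
lemma geom_abs_sum_le (q : ℝ) (hq0 : 0 ≤ q) (hq1 : q < 1) (s : Finset ℕ) (m : ℕ) :
    ∑ l ∈ s, q ^ ((l : ℤ) - (m : ℤ)).natAbs ≤ 2 / (1 - q) := by
  have hsum : Summable (fun i : ℕ => q ^ i) := summable_geometric_of_lt_one hq0 hq1
  have htsum : ∑' i : ℕ, q ^ i = (1 - q)⁻¹ := tsum_geometric_of_lt_one hq0 hq1
  have hpart : ∀ t : Finset ℕ, ∑ i ∈ t, q ^ i ≤ (1 - q)⁻¹ := by
    intro t
    calc ∑ i ∈ t, q ^ i ≤ ∑' i : ℕ, q ^ i := Summable.sum_le_tsum t (fun i _ => pow_nonneg hq0 i) hsum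
    _ = _ := htsum
  rw [← Finset.sum_filter_add_sum_filter_not s (· ≤ m)]
  have h1 : ∑ l ∈ s.filter (· ≤ m), q ^ ((l : ℤ) - (m : ℤ)).natAbs ≤ (1 - q)⁻¹ := by
    have he : ∑ i ∈ (s.filter (· ≤ m)).image (fun l => m - l), q ^ i
        = ∑ l ∈ s.filter (· ≤ m), q ^ ((l : ℤ) - (m : ℤ)).natAbs := by
      rw [Finset.sum_image]
      · refine Finset.sum_congr rfl (fun l hl => ?_)
        have := (Finset.mem_filter.1 hl).2
        congr 1
        omega
      · intro x hx y hy hxy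
        have hx' := (Finset.mem_filter.1 hx).2
        have hy' := (Finset.mem_filter.1 hy).2
        simp only at hxy
        omega
    rw [← he]
    exact hpart _
  have h2 : ∑ l ∈ s.filter (fun l => ¬ l ≤ m), q ^ ((l : ℤ) - (m : ℤ)).natAbs ≤ (1 - q)⁻¹ := by
    have he : ∑ i ∈ (s.filter (fun l => ¬ l ≤ m)).image (fun l => l - m), q ^ i
        = ∑ l ∈ s.filter (fun l => ¬ l ≤ m), q ^ ((l : ℤ) - (m : ℤ)).natAbs := by
      rw [Finset.sum_image]
      · refine Finset.sum_congr rfl (fun l hl => ?_)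
        have := (Finset.mem_filter.1 hl).2
        congr 1
        omega
      · intro x hx y hy hxy
        have hx' := (Finset.mem_filter.1 hx).2
        have hy' := (Finset.mem_filter.1 hy).2
        simp only at hxy
        omega
    rw [← he]
    exact hpart _
  rw [div_eq_mul_inv]
  linarith

/-- Discrete dyadic absorption lemma: if `a_j ≤ b_j + ε₀ Σ_l γ^{|l−j|} a_l` on
`[s₁,s₂]`, with `a` vanishing outside `[s₁−2, s₂+2]` and bounded by `M`, then for
`γ < μ < 1` there is `C = C(μ,γ)` such that whenever `C ε₀ < 1/2`, for every
`j ∈ [s₁,s₂]`: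
`Σ_{l=s₁}^{s₂} μ^{|l−j|} a_l ≤ C Σ_{l=s₁}^{s₂} μ^{|l−j|} b_l + C ε₀ (μ^{j−s₁} + μ^{s₂−j}) M`. -/
theorem discrete_dyadic_absorption (γ μ : ℝ) (hγ : 0 < γ) (hγμ : γ < μ) (hμ : μ < 1) :
    ∃ C : ℝ, 0 < C ∧
      ∀ (a b : ℕ → ℝ) (ε₀ M : ℝ) (s₁ s₂ : ℕ),
        (∀ l, 0 ≤ a l) → (∀ l, 0 ≤ b l) → 0 ≤ ε₀ → 0 ≤ M →
        (∀ j, s₁ ≤ j → j ≤ s₂ →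
          a j ≤ b j + ε₀ * ∑' l : ℕ, γ ^ (Int.natAbs ((l : ℤ) - (j : ℤ))) * a l) →
        (∀ l, l + 3 ≤ s₁ → a l = 0) → (∀ l, s₂ + 3 ≤ l → a l = 0) →
        (∀ l, a l ≤ M) →
        C * ε₀ < 1 / 2 →
        ∀ j, s₁ ≤ j → j ≤ s₂ →
          ∑ l ∈ Finset.Icc s₁ s₂, μ ^ (Int.natAbs ((l : ℤ) - (j : ℤ))) * a l ≤
            C * ∑ l ∈ Finset.Icc s₁ s₂, μ ^ (Int.natAbs ((l : ℤ) - (j : ℤ))) * b l +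
            C * ε₀ * (μ ^ (j - s₁) + μ ^ (s₂ - j)) * M := by
  have hμ0 : 0 < μ := hγ.trans hγμ
  set q := γ / μ with hqdef
  have hq0 : 0 < q := div_pos hγ hμ0
  have hq1 : q < 1 := (div_lt_one hμ0).2 hγμ
  set K := 2 / (1 - q) with hKdef
  have hK0 : 0 < K := by
    apply div_pos <;> linarith
  have hK1 : 1 ≤ K := by
    rw [hKdef, le_div_iff₀ (by linarith)]
    linarith
  have hγeq : γ = μ * q := by
    rw [hqdef, mul_div_assoc', mul_comm, mul_div_assoc, div_self hμ0.ne', mul_one]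
  refine ⟨4 * K, by positivity, ?_⟩
  intro a b ε₀ M s₁ s₂ ha hb hε hM hyp hlow hhigh haM hsmall j hj1 hj2
  set T := Finset.Icc s₁ s₂ with hT
  set R := Finset.range (s₂ + 3) with hR
  have hTR : T ⊆ R := by
    intro x hx
    rw [hT, Finset.mem_Icc] at hx
    rw [hR, Finset.mem_range]
    omega
  set S := ∑ l ∈ T, μ ^ (Int.natAbs ((l : ℤ) - (j : ℤ))) * a l with hS
  set B := ∑ l ∈ T, μ ^ (Int.natAbs ((l : ℤ) - (j : ℤ))) * b l with hB
  have hS0 : 0 ≤ S := Finset.sum_nonneg fun l _ =>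
    mul_nonneg (pow_nonneg hμ0.le _) (ha l)
  have hB0 : 0 ≤ B := Finset.sum_nonneg fun l _ =>
    mul_nonneg (pow_nonneg hμ0.le _) (hb l)
  -- rewrite the tsum as a finite sum over R
  have htsum : ∀ m : ℕ, (∑' l : ℕ, γ ^ (Int.natAbs ((l : ℤ) - (m : ℤ))) * a l)
      = ∑ l ∈ R, γ ^ (Int.natAbs ((l : ℤ) - (m : ℤ))) * a l := by
    intro m
    apply tsum_eq_sum
    intro l hl
    rw [hR, Finset.mem_range] at hl
    rw [hhigh l (by omega), mul_zero]
  -- step 1: weighted sum of the hypothesis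
  have h1 : S ≤ B + ε₀ * ∑ m ∈ T, μ ^ (Int.natAbs ((m : ℤ) - (j : ℤ))) *
      (∑ l ∈ R, γ ^ (Int.natAbs ((l : ℤ) - (m : ℤ))) * a l) := by
    have hstep : S ≤ ∑ m ∈ T, (μ ^ (Int.natAbs ((m : ℤ) - (j : ℤ))) * b m
        + ε₀ * (μ ^ (Int.natAbs ((m : ℤ) - (j : ℤ))) *
          (∑ l ∈ R, γ ^ (Int.natAbs ((l : ℤ) - (m : ℤ))) * a l))) := by
      apply Finset.sum_le_sum
      intro m hm
      rw [hT, Finset.mem_Icc] at hm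
      have hm' := hyp m hm.1 hm.2
      rw [htsum m] at hm'
      have hpow : (0:ℝ) ≤ μ ^ (Int.natAbs ((m : ℤ) - (j : ℤ))) := pow_nonneg hμ0.le _
      nlinarith [mul_le_mul_of_nonneg_left hm' hpow]
    calc S ≤ _ := hstep
    _ = B + ε₀ * ∑ m ∈ T, μ ^ (Int.natAbs ((m : ℤ) - (j : ℤ))) *
        (∑ l ∈ R, γ ^ (Int.natAbs ((l : ℤ) - (m : ℤ))) * a l) := by
      rw [Finset.sum_add_distrib, Finset.mul_sum]
  -- step 2: swap sums and absorb the γ-kernel into the μ-kernel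
  have h2 : (∑ m ∈ T, μ ^ (Int.natAbs ((m : ℤ) - (j : ℤ))) *
      (∑ l ∈ R, γ ^ (Int.natAbs ((l : ℤ) - (m : ℤ))) * a l))
      ≤ K * ∑ l ∈ R, μ ^ (Int.natAbs ((l : ℤ) - (j : ℤ))) * a l := by
    have hswap : (∑ m ∈ T, μ ^ (Int.natAbs ((m : ℤ) - (j : ℤ))) *
        (∑ l ∈ R, γ ^ (Int.natAbs ((l : ℤ) - (m : ℤ))) * a l))
        = ∑ l ∈ R, (∑ m ∈ T, μ ^ (Int.natAbs ((m : ℤ) - (j : ℤ))) *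
            γ ^ (Int.natAbs ((l : ℤ) - (m : ℤ)))) * a l := by
      simp only [Finset.mul_sum, Finset.sum_mul]
      rw [Finset.sum_comm]
      exact Finset.sum_congr rfl fun l _ => Finset.sum_congr rfl fun m _ => by ring
    rw [hswap, Finset.mul_sum]
    apply Finset.sum_le_sum
    intro l _
    rw [← mul_assoc]
    apply mul_le_mul_of_nonneg_right _ (ha l)
    -- kernel bound : Σ_m μ^{|m-j|} γ^{|l-m|} ≤ K μ^{|l-j|}
    have hker : (∑ m ∈ T, μ ^ (Int.natAbs ((m : ℤ) - (j : ℤ))) *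
        γ ^ (Int.natAbs ((l : ℤ) - (m : ℤ))))
        ≤ μ ^ (Int.natAbs ((l : ℤ) - (j : ℤ))) *
          ∑ m ∈ T, q ^ (Int.natAbs ((m : ℤ) - (l : ℤ))) := by
      rw [Finset.mul_sum]
      apply Finset.sum_le_sum
      intro m _
      have htri : Int.natAbs ((l : ℤ) - (j : ℤ)) ≤
          Int.natAbs ((m : ℤ) - (j : ℤ)) + Int.natAbs ((l : ℤ) - (m : ℤ)) := by omega
      have hmono : μ ^ (Int.natAbs ((m : ℤ) - (j : ℤ)) + Int.natAbs ((l : ℤ) - (m : ℤ)))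
          ≤ μ ^ (Int.natAbs ((l : ℤ) - (j : ℤ))) :=
        pow_le_pow_of_le_one hμ0.le hμ.le htri
      have habs : Int.natAbs ((m : ℤ) - (l : ℤ)) = Int.natAbs ((l : ℤ) - (m : ℤ)) := by omega
      calc μ ^ (Int.natAbs ((m : ℤ) - (j : ℤ))) * γ ^ (Int.natAbs ((l : ℤ) - (m : ℤ)))
          = μ ^ (Int.natAbs ((m : ℤ) - (j : ℤ)) + Int.natAbs ((l : ℤ) - (m : ℤ)))
            * q ^ (Int.natAbs ((l : ℤ) - (m : ℤ))) := by
            rw [hγeq, mul_pow, pow_add]; ring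
      _ ≤ μ ^ (Int.natAbs ((l : ℤ) - (j : ℤ))) * q ^ (Int.natAbs ((m : ℤ) - (l : ℤ))) := by
            rw [habs]
            exact mul_le_mul_of_nonneg_right hmono (pow_nonneg hq0.le _)
    calc (∑ m ∈ T, μ ^ (Int.natAbs ((m : ℤ) - (j : ℤ))) *
        γ ^ (Int.natAbs ((l : ℤ) - (m : ℤ)))) ≤ _ := hker
    _ ≤ μ ^ (Int.natAbs ((l : ℤ) - (j : ℤ))) * K :=
        mul_le_mul_of_nonneg_left (geom_abs_sum_le q hq0.le hq1 T l) (pow_nonneg hμ0.le _)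
    _ = K * μ ^ (Int.natAbs ((l : ℤ) - (j : ℤ))) := mul_comm _ _
  -- step 3: split the R-sum into T and boundary
  have hsplit : (∑ l ∈ R, μ ^ (Int.natAbs ((l : ℤ) - (j : ℤ))) * a l)
      = (∑ l ∈ R \ T, μ ^ (Int.natAbs ((l : ℤ) - (j : ℤ))) * a l) + S := by
    rw [hS, Finset.sum_sdiff hTR]
  -- boundary estimate
  have hbound : (∑ l ∈ R \ T, μ ^ (Int.natAbs ((l : ℤ) - (j : ℤ))) * a l)
      ≤ 2 * μ ^ (j - s₁) * M + 2 * μ ^ (s₂ - j) * M := by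
    have hRT : R \ T = Finset.range s₁ ∪ Finset.Icc (s₂ + 1) (s₂ + 2) := by
      ext x
      simp only [Finset.mem_sdiff, hR, hT, Finset.mem_range, Finset.mem_Icc,
        Finset.mem_union]
      omega
    have hdisj : Disjoint (Finset.range s₁) (Finset.Icc (s₂ + 1) (s₂ + 2)) := by
      rw [Finset.disjoint_left]
      intro x hx hx'
      rw [Finset.mem_range] at hx
      rw [Finset.mem_Icc] at hx'
      omega
    rw [hRT, Finset.sum_union hdisj]
    have hlowsum : (∑ l ∈ Finset.range s₁, μ ^ (Int.natAbs ((l : ℤ) - (j : ℤ))) * a l)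
        ≤ 2 * μ ^ (j - s₁) * M := by
      have hz : (∑ l ∈ Finset.range s₁, μ ^ (Int.natAbs ((l : ℤ) - (j : ℤ))) * a l)
          = ∑ l ∈ Finset.Ico (s₁ - 2) s₁, μ ^ (Int.natAbs ((l : ℤ) - (j : ℤ))) * a l := by
        refine (Finset.sum_subset ?_ ?_).symm
        · intro x hx
          rw [Finset.mem_Ico] at hx
          rw [Finset.mem_range]
          omega
        · intro x hx hx'
          rw [Finset.mem_range] at hx
          rw [Finset.mem_Ico] at hx'
          rw [hlow x (by omega), mul_zero]
      rw [hz]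
      calc (∑ l ∈ Finset.Ico (s₁ - 2) s₁, μ ^ (Int.natAbs ((l : ℤ) - (j : ℤ))) * a l)
          ≤ ∑ _l ∈ Finset.Ico (s₁ - 2) s₁, μ ^ (j - s₁) * M := by
            apply Finset.sum_le_sum
            intro l hl
            rw [Finset.mem_Ico] at hl
            have hle : j - s₁ ≤ Int.natAbs ((l : ℤ) - (j : ℤ)) := by omega
            exact mul_le_mul (pow_le_pow_of_le_one hμ0.le hμ.le hle) (haM l) (ha l)
              (pow_nonneg hμ0.le _)
      _ = (Finset.Ico (s₁ - 2) s₁).card * (μ ^ (j - s₁) * M) := by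
            rw [Finset.sum_const, nsmul_eq_mul]
      _ ≤ 2 * (μ ^ (j - s₁) * M) := by
            apply mul_le_mul_of_nonneg_right _ (mul_nonneg (pow_nonneg hμ0.le _) hM)
            rw [Nat.card_Ico]
            have : s₁ - (s₁ - 2) ≤ 2 := by omega
            exact_mod_cast Nat.cast_le.2 this
      _ = 2 * μ ^ (j - s₁) * M := by ring
    have hhighsum : (∑ l ∈ Finset.Icc (s₂ + 1) (s₂ + 2),
        μ ^ (Int.natAbs ((l : ℤ) - (j : ℤ))) * a l) ≤ 2 * μ ^ (s₂ - j) * M := by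
      calc (∑ l ∈ Finset.Icc (s₂ + 1) (s₂ + 2), μ ^ (Int.natAbs ((l : ℤ) - (j : ℤ))) * a l)
          ≤ ∑ _l ∈ Finset.Icc (s₂ + 1) (s₂ + 2), μ ^ (s₂ - j) * M := by
            apply Finset.sum_le_sum
            intro l hl
            rw [Finset.mem_Icc] at hl
            have hle : s₂ - j ≤ Int.natAbs ((l : ℤ) - (j : ℤ)) := by omega
            exact mul_le_mul (pow_le_pow_of_le_one hμ0.le hμ.le hle) (haM l) (ha l)
              (pow_nonneg hμ0.le _)
      _ = (Finset.Icc (s₂ + 1) (s₂ + 2)).card * (μ ^ (s₂ - j) * M) := by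
            rw [Finset.sum_const, nsmul_eq_mul]
      _ ≤ 2 * (μ ^ (s₂ - j) * M) := by
            apply mul_le_mul_of_nonneg_right _ (mul_nonneg (pow_nonneg hμ0.le _) hM)
            rw [Nat.card_Icc]
            norm_num
      _ = 2 * μ ^ (s₂ - j) * M := by ring
    linarith
  -- combine
  set P₁ := μ ^ (j - s₁) with hP₁
  set P₂ := μ ^ (s₂ - j) with hP₂
  have hP₁0 : 0 ≤ P₁ := pow_nonneg hμ0.le _
  have hP₂0 : 0 ≤ P₂ := pow_nonneg hμ0.le _
  have h3 : ε₀ * (∑ m ∈ T, μ ^ (Int.natAbs ((m : ℤ) - (j : ℤ))) *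
      (∑ l ∈ R, γ ^ (Int.natAbs ((l : ℤ) - (m : ℤ))) * a l))
      ≤ ε₀ * (K * ∑ l ∈ R, μ ^ (Int.natAbs ((l : ℤ) - (j : ℤ))) * a l) :=
    mul_le_mul_of_nonneg_left h2 hε
  have h4 : K * (∑ l ∈ R, μ ^ (Int.natAbs ((l : ℤ) - (j : ℤ))) * a l)
      ≤ K * (2 * P₁ * M + 2 * P₂ * M + S) := by
    apply mul_le_mul_of_nonneg_left _ hK0.le
    rw [hsplit]
    linarith
  have h5 : ε₀ * (K * (∑ l ∈ R, μ ^ (Int.natAbs ((l : ℤ) - (j : ℤ))) * a l))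
      ≤ ε₀ * (K * (2 * P₁ * M + 2 * P₂ * M + S)) := mul_le_mul_of_nonneg_left h4 hε
  clear_value S B P₁ P₂
  have hmain : S ≤ B + ε₀ * (K * S) + 2 * (ε₀ * K * (P₁ + P₂) * M) := by
    linarith only [h1, h3, h5]
  have hεK : ε₀ * K ≤ 1 / 8 := by linarith only [hsmall]
  have hεKS : ε₀ * (K * S) ≤ (1 / 8) * S := by
    linarith only [mul_le_mul_of_nonneg_right hεK hS0]
  have hB4 : (8 / 7 : ℝ) * B ≤ 4 * K * B := by
    linarith only [mul_nonneg (by linarith : (0:ℝ) ≤ K - 1) hB0, hB0]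
  have hX0 : 0 ≤ ε₀ * K * (P₁ + P₂) * M := by positivity
  have hX2 : (16 / 7 : ℝ) * (ε₀ * K * (P₁ + P₂) * M) ≤ 4 * K * ε₀ * (P₁ + P₂) * M := by
    linarith only [hX0]
  linarith only [hmain, hεKS, hB4, hX2]
end

section
/- Let A(η,δ) = B_η \ closure(B_{δ/η}) ⊂ ℝ² with 0 < δ < η² < 1, and let u be a map such that for every x ∈ A(η,δ) one has the annular ε-regularity estimate |∇u(x)| ≤ (C/|x|)·‖∇u‖_{L²(B_{3|x|/2} \ B_{3|x|/8})}. Then ‖∇u‖_{L^{2,∞}(A(η,δ))} ≤ C' · sup_{δ/(2η) < ρ < η} (∫_{B_{2ρ} \ B_ρ} |∇u|² dx)^{1/2}, where ‖g‖_{L^{2,∞}(Ω)} = sup_{λ>0} λ |{x ∈ Ω : |g(x)| ≥ λ}|^{1/2}. -/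
open MeasureTheory Metric
open scoped ENNReal

/-- The weak-`L²` (Marcinkiewicz) quasinorm
`‖g‖_{L^{2,∞}(Ω)} = sup_{t>0} t |{x ∈ Ω : g x ≥ t}|^{1/2}`. -/
noncomputable def weakL2Norm (Ω : Set (EuclideanSpace ℝ (Fin 2)))
    (g : EuclideanSpace ℝ (Fin 2) → ℝ) : ℝ≥0∞ :=
  ⨆ t ∈ Set.Ioi (0 : ℝ), ENNReal.ofReal t * (volume {x | x ∈ Ω ∧ t ≤ g x}) ^ (1 / 2 : ℝ)

private lemma sq_mul_rpow_half (a b : ℝ≥0∞) :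
    (a ^ (2 : ℕ) * b) ^ (1 / 2 : ℝ) = a * b ^ (1 / 2 : ℝ) := by
  rw [ENNReal.mul_rpow_of_nonneg _ _ (by norm_num : (0:ℝ) ≤ 1/2),
    ← ENNReal.rpow_natCast a 2, ← ENNReal.rpow_mul]
  norm_num

private lemma le_sq_of_rpow_half_le {a S : ℝ≥0∞} (h : a ^ (1 / 2 : ℝ) ≤ S) :
    a ≤ S ^ (2 : ℝ) := by
  have : a = (a ^ (1 / 2 : ℝ)) ^ (2 : ℝ) := by
    rw [← ENNReal.rpow_mul]; norm_num
  rw [this]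
  exact ENNReal.rpow_le_rpow h (by norm_num)

/-- From the annular `ε`-regularity bound
`|∇u(x)| ≤ (C/|x|)·‖∇u‖_{L²(B_{3|x|/2}∖B_{3|x|/8})}` on the neck annulus
`A(η,δ) = B_η ∖ closure(B_{δ/η})`, one deduces
`‖∇u‖_{L^{2,∞}(A(η,δ))} ≤ C'·sup_{δ/(2η)<ρ<η} (∫_{B_{2ρ}∖B_ρ}|∇u|²)^{1/2}`. -/
theorem weak_L2_neck_estimate {n : ℕ} (C : ℝ) (hC : 0 < C) :
    ∃ C' : ℝ, 0 < C' ∧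
      ∀ (η δ : ℝ), 0 < δ → δ < η ^ 2 → η ^ 2 < 1 →
        ∀ u : EuclideanSpace ℝ (Fin 2) → EuclideanSpace ℝ (Fin (n + 1)),
          (∀ x ∈ ball (0 : EuclideanSpace ℝ (Fin 2)) η \ closedBall 0 (δ / η),
            ENNReal.ofReal ‖fderiv ℝ u x‖ ≤
              ENNReal.ofReal (C / ‖x‖) *
                (∫⁻ y in ball (0 : EuclideanSpace ℝ (Fin 2)) (3 * ‖x‖ / 2) \ closedBall 0 (3 * ‖x‖ / 8),
                  ENNReal.ofReal (‖fderiv ℝ u y‖ ^ 2)) ^ (1 / 2 : ℝ)) →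
          weakL2Norm (ball (0 : EuclideanSpace ℝ (Fin 2)) η \ closedBall 0 (δ / η))
              (fun x => ‖fderiv ℝ u x‖) ≤
            ENNReal.ofReal C' *
              ⨆ ρ ∈ Set.Ioo (δ / (2 * η)) η,
                (∫⁻ y in ball (0 : EuclideanSpace ℝ (Fin 2)) (2 * ρ) \ closedBall 0 ρ,
                  ENNReal.ofReal (‖fderiv ℝ u y‖ ^ 2)) ^ (1 / 2 : ℝ) := by
  classical
  set V : ℝ≥0∞ := volume (closedBall (0 : EuclideanSpace ℝ (Fin 2)) 1) with hVdef
  have hVfin : V ≠ ⊤ := measure_closedBall_lt_top.ne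
  have hVh_fin : V ^ (1 / 2 : ℝ) ≠ ⊤ :=
    (ENNReal.rpow_lt_top_of_nonneg (by norm_num) hVfin).ne
  set K : ℝ≥0∞ := 1 + ENNReal.ofReal (Real.sqrt 3 * C) * V ^ (1 / 2 : ℝ) with hKdef
  have hKfin : K ≠ ⊤ := by
    rw [hKdef]
    exact ENNReal.add_ne_top.2 ⟨ENNReal.one_ne_top,
      ENNReal.mul_ne_top ENNReal.ofReal_ne_top hVh_fin⟩
  refine ⟨K.toReal + 1, by positivity, ?_⟩
  have hKC' : K ≤ ENNReal.ofReal (K.toReal + 1) := by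
    calc K = ENNReal.ofReal K.toReal := (ENNReal.ofReal_toReal hKfin).symm
    _ ≤ ENNReal.ofReal (K.toReal + 1) := ENNReal.ofReal_le_ofReal (by linarith)
  intro η δ hδ hδη2 hη2 u hu
  rcases le_or_gt η 0 with hη | hη
  · -- degenerate case: the annulus is empty
    have hb : ball (0 : EuclideanSpace ℝ (Fin 2)) η = ∅ := ball_eq_empty.2 hη
    refine le_trans (le_of_eq ?_) zero_le
    simp [weakL2Norm, hb, Set.empty_diff,
      ENNReal.zero_rpow_of_pos (by norm_num : (0:ℝ) < 1/2)]
  -- main case : 0 < η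
  have hηη : δ < η * η := by nlinarith
  have hδη : δ / η < η := by rw [div_lt_iff₀ hη]; exact hηη
  have ha : 0 < δ / η := div_pos hδ hη
  have hA : δ / (2 * η) = (δ / η) / 2 := by ring
  set Ω : Set (EuclideanSpace ℝ (Fin 2)) :=
    ball (0 : EuclideanSpace ℝ (Fin 2)) η \ closedBall 0 (δ / η) with hΩdef
  set S : ℝ≥0∞ :=
    ⨆ ρ ∈ Set.Ioo (δ / (2 * η)) η,
      (∫⁻ y in ball (0 : EuclideanSpace ℝ (Fin 2)) (2 * ρ) \ closedBall 0 ρ,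
        ENNReal.ofReal (‖fderiv ℝ u y‖ ^ 2)) ^ (1 / 2 : ℝ) with hSdef
  have hannulus : ∀ ρ, ρ ∈ Set.Ioo (δ / (2 * η)) η →
      (∫⁻ y in ball (0 : EuclideanSpace ℝ (Fin 2)) (2 * ρ) \ closedBall 0 ρ,
        ENNReal.ofReal (‖fderiv ℝ u y‖ ^ 2)) ^ (1 / 2 : ℝ) ≤ S := by
    intro ρ hρ
    rw [hSdef]
    exact le_iSup₂ (f := fun ρ (_ : ρ ∈ Set.Ioo (δ / (2 * η)) η) =>
      (∫⁻ y in ball (0 : EuclideanSpace ℝ (Fin 2)) (2 * ρ) \ closedBall 0 ρ,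
        ENNReal.ofReal (‖fderiv ℝ u y‖ ^ 2)) ^ (1 / 2 : ℝ)) ρ hρ
  by_cases hStop : S = ⊤
  · rw [hStop, ENNReal.mul_top (by simpa using (ENNReal.ofReal_pos.2 (by positivity)).ne')]
    exact le_top
  set s : ℝ := S.toReal with hsdef
  have hs0 : 0 ≤ s := ENNReal.toReal_nonneg
  have hofs : ENNReal.ofReal s ≤ S := ENNReal.ofReal_toReal_le
  -- unfold the weak L² norm and bound each level set
  rw [weakL2Norm]
  refine iSup₂_le fun t ht => ?_
  have ht0 : (0 : ℝ) < t := ht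
  set E : Set (EuclideanSpace ℝ (Fin 2)) := {x | x ∈ Ω ∧ t ≤ ‖fderiv ℝ u x‖} with hEdef
  have hgmeas : Measurable fun x : EuclideanSpace ℝ (Fin 2) => ‖fderiv ℝ u x‖ :=
    (measurable_fderiv ℝ u).norm
  have hΩmeas : MeasurableSet Ω := measurableSet_ball.diff measurableSet_closedBall
  have hEmeas : MeasurableSet E := by
    have : E = Ω ∩ {x | t ≤ ‖fderiv ℝ u x‖} := rfl
    rw [this]
    exact hΩmeas.inter (measurableSet_le measurable_const hgmeas)
  set E1 : Set (EuclideanSpace ℝ (Fin 2)) :=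
    E ∩ ball 0 (3 * δ / (2 * η)) with hE1def
  set E2 : Set (EuclideanSpace ℝ (Fin 2)) :=
    E \ ball 0 (3 * δ / (2 * η)) with hE2def
  have hE1meas : MeasurableSet E1 := hEmeas.inter measurableSet_ball
  have hEsplit : E ⊆ E1 ∪ E2 := by
    intro x hx
    by_cases h : x ∈ ball (0 : EuclideanSpace ℝ (Fin 2)) (3 * δ / (2 * η))
    · exact Or.inl ⟨hx, h⟩
    · exact Or.inr ⟨hx, h⟩
  -- facts about points of Ω
  have hΩnorm : ∀ x ∈ Ω, δ / η < ‖x‖ ∧ ‖x‖ < η := by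
    intro x hx
    constructor
    · have := hx.2
      rw [mem_closedBall_zero_iff] at this
      exact lt_of_not_ge fun h => this h
    · exact mem_ball_zero_iff.1 hx.1
  -- Step 1 : Chebyshev on the inner part E1
  have hρ0mem : 3 * δ / (4 * η) ∈ Set.Ioo (δ / (2 * η)) η := by
    constructor
    · rw [hA]
      have : 3 * δ / (4 * η) = 3 / 4 * (δ / η) := by ring
      rw [this]
      linarith
    · rw [div_lt_iff₀ (by linarith : (0:ℝ) < 4 * η)]
      nlinarith
  have hE1sub : E1 ⊆ ball (0 : EuclideanSpace ℝ (Fin 2)) (2 * (3 * δ / (4 * η))) \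
      closedBall 0 (3 * δ / (4 * η)) := by
    intro x hx
    obtain ⟨⟨hxΩ, _⟩, hxb⟩ := hx
    obtain ⟨hxlo, _⟩ := hΩnorm x hxΩ
    have hxb' : ‖x‖ < 3 * δ / (2 * η) := mem_ball_zero_iff.1 hxb
    constructor
    · rw [mem_ball_zero_iff]
      have : 2 * (3 * δ / (4 * η)) = 3 * δ / (2 * η) := by ring
      rw [this]; exact hxb'
    · rw [mem_closedBall_zero_iff]
      push_neg
      have h1 : 3 * δ / (4 * η) = 3 / 4 * (δ / η) := by ring
      rw [h1]
      linarith
  have hstep1 : ENNReal.ofReal t * (volume E1) ^ (1 / 2 : ℝ) ≤ S := by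
    have hcheb : ENNReal.ofReal t ^ (2 : ℕ) * volume E1 ≤
        ∫⁻ y in ball (0 : EuclideanSpace ℝ (Fin 2)) (2 * (3 * δ / (4 * η))) \
          closedBall 0 (3 * δ / (4 * η)), ENNReal.ofReal (‖fderiv ℝ u y‖ ^ 2) := by
      calc ENNReal.ofReal t ^ (2 : ℕ) * volume E1
          = ∫⁻ _ in E1, ENNReal.ofReal t ^ (2 : ℕ) := (setLIntegral_const _ _).symm
        _ = ∫⁻ _ in E1, ENNReal.ofReal (t ^ 2) := by
            rw [ENNReal.ofReal_pow ht0.le]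
        _ ≤ ∫⁻ y in E1, ENNReal.ofReal (‖fderiv ℝ u y‖ ^ 2) := by
            refine lintegral_mono_ae ?_
            refine (ae_restrict_iff' hE1meas).2 (ae_of_all _ fun y hy => ?_)
            exact ENNReal.ofReal_le_ofReal
              (pow_le_pow_left₀ ht0.le hy.1.2 2)
        _ ≤ _ := lintegral_mono_set hE1sub
    calc ENNReal.ofReal t * (volume E1) ^ (1 / 2 : ℝ)
        = (ENNReal.ofReal t ^ (2 : ℕ) * volume E1) ^ (1 / 2 : ℝ) :=
          (sq_mul_rpow_half _ _).symm
      _ ≤ (∫⁻ y in ball (0 : EuclideanSpace ℝ (Fin 2)) (2 * (3 * δ / (4 * η))) \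
            closedBall 0 (3 * δ / (4 * η)), ENNReal.ofReal (‖fderiv ℝ u y‖ ^ 2)) ^ (1 / 2 : ℝ) :=
          ENNReal.rpow_le_rpow hcheb (by norm_num)
      _ ≤ S := hannulus _ hρ0mem
  -- Step 2 : pointwise bound on the outer part E2
  have h3sqrt : ((3 : ℝ≥0∞)) ^ (1 / 2 : ℝ) = ENNReal.ofReal (Real.sqrt 3) := by
    rw [Real.sqrt_eq_rpow, ← ENNReal.ofReal_rpow_of_pos (by norm_num : (0:ℝ) < 3)]
    norm_num
  set R : ℝ := Real.sqrt 3 * C * s / t with hRdef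
  have hR0 : 0 ≤ R := by
    have := Real.sqrt_nonneg 3
    positivity
  have hE2sub : E2 ⊆ closedBall (0 : EuclideanSpace ℝ (Fin 2)) R := by
    intro x hx
    obtain ⟨⟨hxΩ, hxg⟩, hxb⟩ := hx
    obtain ⟨hxlo, hxhi⟩ := hΩnorm x hxΩ
    have hx1 : 3 * δ / (2 * η) ≤ ‖x‖ := by
      by_contra h
      exact hxb (mem_ball_zero_iff.2 (lt_of_not_ge h))
    have hx1' : 3 / 2 * (δ / η) ≤ ‖x‖ := by
      calc 3 / 2 * (δ / η) = 3 * δ / (2 * η) := by ring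
        _ ≤ ‖x‖ := hx1
    have hxpos : 0 < ‖x‖ := lt_of_lt_of_le (by positivity) hx1'
    -- cover the annulus B_{3‖x‖/2} \ B_{3‖x‖/8} by three dyadic annuli
    have hcover : ball (0 : EuclideanSpace ℝ (Fin 2)) (3 * ‖x‖ / 2) \
        closedBall 0 (3 * ‖x‖ / 8) ⊆
        (ball (0 : EuclideanSpace ℝ (Fin 2)) (2 * (3 * ‖x‖ / 8)) \ closedBall 0 (3 * ‖x‖ / 8)) ∪
        ((ball (0 : EuclideanSpace ℝ (Fin 2)) (2 * (‖x‖ / 2)) \ closedBall 0 (‖x‖ / 2)) ∪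
         (ball (0 : EuclideanSpace ℝ (Fin 2)) (2 * (3 * ‖x‖ / 4)) \ closedBall 0 (3 * ‖x‖ / 4))) := by
      intro y hy
      have hy1 : ‖y‖ < 3 * ‖x‖ / 2 := mem_ball_zero_iff.1 hy.1
      have hy2 : 3 * ‖x‖ / 8 < ‖y‖ := by
        have := hy.2
        rw [mem_closedBall_zero_iff] at this
        exact lt_of_not_ge fun h => this h
      rcases lt_trichotomy ‖y‖ (3 * ‖x‖ / 4) with h | h | h
      · left
        exact ⟨mem_ball_zero_iff.2 (by linarith), by
          rw [mem_closedBall_zero_iff]; push_neg; linarith⟩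
      · right; left
        exact ⟨mem_ball_zero_iff.2 (by rw [h]; linarith), by
          rw [mem_closedBall_zero_iff]; push_neg; rw [h]; linarith⟩
      · right; right
        exact ⟨mem_ball_zero_iff.2 (by linarith), by
          rw [mem_closedBall_zero_iff]; push_neg; linarith⟩
    have hmem1 : 3 * ‖x‖ / 8 ∈ Set.Ioo (δ / (2 * η)) η := by
      rw [hA] at *
      constructor <;> [linarith; linarith]
    have hmem2 : ‖x‖ / 2 ∈ Set.Ioo (δ / (2 * η)) η := by
      rw [hA]
      constructor <;> [linarith; linarith]
    have hmem3 : 3 * ‖x‖ / 4 ∈ Set.Ioo (δ / (2 * η)) η := by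
      rw [hA]
      constructor <;> [linarith; linarith]
    have hIbound : (∫⁻ y in ball (0 : EuclideanSpace ℝ (Fin 2)) (3 * ‖x‖ / 2) \
        closedBall 0 (3 * ‖x‖ / 8), ENNReal.ofReal (‖fderiv ℝ u y‖ ^ 2)) ≤
        3 * S ^ (2 : ℝ) := by
      have h1 := le_sq_of_rpow_half_le (hannulus _ hmem1)
      have h2 := le_sq_of_rpow_half_le (hannulus _ hmem2)
      have h3 := le_sq_of_rpow_half_le (hannulus _ hmem3)
      calc (∫⁻ y in ball (0 : EuclideanSpace ℝ (Fin 2)) (3 * ‖x‖ / 2) \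
            closedBall 0 (3 * ‖x‖ / 8), ENNReal.ofReal (‖fderiv ℝ u y‖ ^ 2))
          ≤ ∫⁻ y in (ball (0 : EuclideanSpace ℝ (Fin 2)) (2 * (3 * ‖x‖ / 8)) \
              closedBall 0 (3 * ‖x‖ / 8)) ∪
            ((ball (0 : EuclideanSpace ℝ (Fin 2)) (2 * (‖x‖ / 2)) \ closedBall 0 (‖x‖ / 2)) ∪
             (ball (0 : EuclideanSpace ℝ (Fin 2)) (2 * (3 * ‖x‖ / 4)) \
              closedBall 0 (3 * ‖x‖ / 4))), ENNReal.ofReal (‖fderiv ℝ u y‖ ^ 2) :=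
            lintegral_mono_set hcover
        _ ≤ (∫⁻ y in ball (0 : EuclideanSpace ℝ (Fin 2)) (2 * (3 * ‖x‖ / 8)) \
              closedBall 0 (3 * ‖x‖ / 8), ENNReal.ofReal (‖fderiv ℝ u y‖ ^ 2)) +
            ((∫⁻ y in ball (0 : EuclideanSpace ℝ (Fin 2)) (2 * (‖x‖ / 2)) \
              closedBall 0 (‖x‖ / 2), ENNReal.ofReal (‖fderiv ℝ u y‖ ^ 2)) +
             (∫⁻ y in ball (0 : EuclideanSpace ℝ (Fin 2)) (2 * (3 * ‖x‖ / 4)) \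
              closedBall 0 (3 * ‖x‖ / 4), ENNReal.ofReal (‖fderiv ℝ u y‖ ^ 2))) := by
            refine le_trans (lintegral_union_le _ _ _) ?_
            exact add_le_add le_rfl (lintegral_union_le _ _ _)
        _ ≤ S ^ (2 : ℝ) + (S ^ (2 : ℝ) + S ^ (2 : ℝ)) :=
            add_le_add h1 (add_le_add h2 h3)
        _ = 3 * S ^ (2 : ℝ) := by ring
    have hIhalf : (∫⁻ y in ball (0 : EuclideanSpace ℝ (Fin 2)) (3 * ‖x‖ / 2) \
        closedBall 0 (3 * ‖x‖ / 8), ENNReal.ofReal (‖fderiv ℝ u y‖ ^ 2)) ^ (1 / 2 : ℝ) ≤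
        ENNReal.ofReal (Real.sqrt 3) * S := by
      calc (∫⁻ y in ball (0 : EuclideanSpace ℝ (Fin 2)) (3 * ‖x‖ / 2) \
            closedBall 0 (3 * ‖x‖ / 8), ENNReal.ofReal (‖fderiv ℝ u y‖ ^ 2)) ^ (1 / 2 : ℝ)
          ≤ (3 * S ^ (2 : ℝ)) ^ (1 / 2 : ℝ) := ENNReal.rpow_le_rpow hIbound (by norm_num)
        _ = (3 : ℝ≥0∞) ^ (1 / 2 : ℝ) * (S ^ (2 : ℝ)) ^ (1 / 2 : ℝ) :=
            ENNReal.mul_rpow_of_nonneg _ _ (by norm_num)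
        _ = ENNReal.ofReal (Real.sqrt 3) * S := by
            rw [h3sqrt, ← ENNReal.rpow_mul]
            norm_num
    have hptw : ENNReal.ofReal t ≤ ENNReal.ofReal (C / ‖x‖) *
        (ENNReal.ofReal (Real.sqrt 3) * S) := by
      calc ENNReal.ofReal t ≤ ENNReal.ofReal ‖fderiv ℝ u x‖ := ENNReal.ofReal_le_ofReal hxg
        _ ≤ _ := le_trans (hu x hxΩ) (mul_le_mul_right hIhalf _)
    have hmul : ENNReal.ofReal (t * ‖x‖) ≤
        ENNReal.ofReal (Real.sqrt 3 * C) * S := by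
      have h1 : ENNReal.ofReal t * ENNReal.ofReal ‖x‖ ≤
          ENNReal.ofReal (C / ‖x‖) * (ENNReal.ofReal (Real.sqrt 3) * S) *
            ENNReal.ofReal ‖x‖ := mul_le_mul_left hptw _
      have hc : ENNReal.ofReal (C / ‖x‖) * ENNReal.ofReal ‖x‖ = ENNReal.ofReal C := by
        rw [← ENNReal.ofReal_mul (by positivity : (0:ℝ) ≤ C / ‖x‖),
          div_mul_cancel₀ C hxpos.ne']
      have h2 : ENNReal.ofReal (C / ‖x‖) * (ENNReal.ofReal (Real.sqrt 3) * S) *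
          ENNReal.ofReal ‖x‖ = ENNReal.ofReal (Real.sqrt 3 * C) * S := by
        calc ENNReal.ofReal (C / ‖x‖) * (ENNReal.ofReal (Real.sqrt 3) * S) *
            ENNReal.ofReal ‖x‖
            = ENNReal.ofReal (C / ‖x‖) * ENNReal.ofReal ‖x‖ *
              (ENNReal.ofReal (Real.sqrt 3) * S) := by ring
          _ = ENNReal.ofReal C * (ENNReal.ofReal (Real.sqrt 3) * S) := by rw [hc]
          _ = ENNReal.ofReal C * ENNReal.ofReal (Real.sqrt 3) * S := by ring
          _ = ENNReal.ofReal (C * Real.sqrt 3) * S := by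
              rw [← ENNReal.ofReal_mul hC.le]
          _ = ENNReal.ofReal (Real.sqrt 3 * C) * S := by rw [mul_comm C (Real.sqrt 3)]
      rw [ENNReal.ofReal_mul ht0.le]
      exact h1.trans (le_of_eq h2)
    have hRHSfin : ENNReal.ofReal (Real.sqrt 3 * C) * S ≠ ⊤ :=
      ENNReal.mul_ne_top ENNReal.ofReal_ne_top hStop
    have htx : t * ‖x‖ ≤ Real.sqrt 3 * C * s := by
      have := (ENNReal.ofReal_le_iff_le_toReal hRHSfin).1 hmul
      rwa [ENNReal.toReal_mul, ENNReal.toReal_ofReal (by positivity)] at this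
    rw [mem_closedBall_zero_iff]
    have : ‖x‖ ≤ R := by
      rw [hRdef, le_div_iff₀ ht0]
      linarith [htx]
    simpa [abs_of_nonneg (norm_nonneg x)] using this
  have hstep2 : ENNReal.ofReal t * (volume E2) ^ (1 / 2 : ℝ) ≤
      ENNReal.ofReal (Real.sqrt 3 * C) * V ^ (1 / 2 : ℝ) * S := by
    have hvol : volume E2 ≤ ENNReal.ofReal R ^ (2 : ℕ) * V := by
      calc volume E2 ≤ volume (closedBall (0 : EuclideanSpace ℝ (Fin 2)) R) :=
            measure_mono hE2sub
        _ = ENNReal.ofReal (R ^ Module.finrank ℝ (EuclideanSpace ℝ (Fin 2))) * V :=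
            Measure.addHaar_closedBall' volume _ hR0
        _ = ENNReal.ofReal R ^ (2 : ℕ) * V := by
            rw [finrank_euclideanSpace_fin, ENNReal.ofReal_pow hR0]
    calc ENNReal.ofReal t * (volume E2) ^ (1 / 2 : ℝ)
        ≤ ENNReal.ofReal t * (ENNReal.ofReal R ^ (2 : ℕ) * V) ^ (1 / 2 : ℝ) :=
          mul_le_mul_right (ENNReal.rpow_le_rpow hvol (by norm_num)) _
      _ = ENNReal.ofReal t * (ENNReal.ofReal R * V ^ (1 / 2 : ℝ)) := by
          rw [sq_mul_rpow_half]
      _ = ENNReal.ofReal (t * R) * V ^ (1 / 2 : ℝ) := by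
          rw [ENNReal.ofReal_mul ht0.le, mul_assoc]
      _ = ENNReal.ofReal (Real.sqrt 3 * C * s) * V ^ (1 / 2 : ℝ) := by
          have : t * R = Real.sqrt 3 * C * s := by
            rw [hRdef]; field_simp
          rw [this]
      _ = ENNReal.ofReal (Real.sqrt 3 * C) * ENNReal.ofReal s * V ^ (1 / 2 : ℝ) := by
          rw [ENNReal.ofReal_mul (by positivity)]
      _ ≤ ENNReal.ofReal (Real.sqrt 3 * C) * S * V ^ (1 / 2 : ℝ) := by
          exact mul_le_mul_left (mul_le_mul_right hofs _) _
      _ = ENNReal.ofReal (Real.sqrt 3 * C) * V ^ (1 / 2 : ℝ) * S := by ring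
  -- combine the two pieces
  calc ENNReal.ofReal t * (volume E) ^ (1 / 2 : ℝ)
      ≤ ENNReal.ofReal t * (volume E1 + volume E2) ^ (1 / 2 : ℝ) := by
        refine mul_le_mul_right (ENNReal.rpow_le_rpow ?_ (by norm_num)) _
        exact le_trans (measure_mono hEsplit) (measure_union_le _ _)
    _ ≤ ENNReal.ofReal t * ((volume E1) ^ (1 / 2 : ℝ) + (volume E2) ^ (1 / 2 : ℝ)) :=
        mul_le_mul_right (ENNReal.rpow_add_le_add_rpow _ _ (by norm_num) (by norm_num)) _
    _ = ENNReal.ofReal t * (volume E1) ^ (1 / 2 : ℝ) +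
        ENNReal.ofReal t * (volume E2) ^ (1 / 2 : ℝ) := by rw [mul_add]
    _ ≤ S + ENNReal.ofReal (Real.sqrt 3 * C) * V ^ (1 / 2 : ℝ) * S :=
        add_le_add hstep1 hstep2
    _ = K * S := by rw [hKdef]; ring
    _ ≤ ENNReal.ofReal (K.toReal + 1) * S := mul_le_mul_left hKC' _
end
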